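/- Let A be a hereditary tree (H-tree) on the unit sphere S_X of a Banach space X. For c > 1 and a finite-dimensional subspace F of X, set A_{(F,c)} = {(x_1,...,x_n) ∈ A : ‖a_0 y + Σ_{i=1}^m a_i x_i‖ ≤ c‖a_0 y + Σ_{i=1}^n a_i x_i‖ for all y ∈ F, all scalars a_0,...,a_n ∈ ℝ, and all 0 ≤ m ≤ n}. Then for every countable ordinal α, if A^(α) ≠ ∅, then (A_{(F,c)})^(α) ≠ ∅ for every c > 1 and every finite-dimensional subspace F ⊆ X. -/

import Mathlib

open Metric Set Filter TopologicalSpace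
open scoped ENNReal

noncomputable section

/-- A set `U` in the dual of `X` is weak\*-open if every point of `U` has a basic weak\*
neighborhood (determined by finitely many points of `X`) contained in `U`. -/
def IsWeakStarOpen {X : Type*} [NormedAddCommGroup X] [NormedSpace ℝ X]
    (U : Set (X →L[ℝ] ℝ)) : Prop :=
  ∀ f ∈ U, ∃ (n : ℕ) (x : Fin n → X) (δ : ℝ), 0 < δ ∧
    ∀ g : X →L[ℝ] ℝ, (∀ i, |g (x i) - f (x i)| < δ) → g ∈ U

/-- The Szlenk derivation: remove all points of `K` lying in a relatively weak\*-open
subset of `K` of norm diameter less than `ε`. -/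
def szlenkDeriv {X : Type*} [NormedAddCommGroup X] [NormedSpace ℝ X]
    (ε : ℝ) (K : Set (X →L[ℝ] ℝ)) : Set (X →L[ℝ] ℝ) :=
  {f | f ∈ K ∧ ¬ ∃ U : Set (X →L[ℝ] ℝ), IsWeakStarOpen U ∧ f ∈ U ∧
    EMetric.diam (K ∩ U) < ENNReal.ofReal ε}

/-- The dentability derivation: remove all points of `K` lying in a weak\*-slice of `K`
of norm diameter less than `ε`. -/
def dentDeriv {X : Type*} [NormedAddCommGroup X] [NormedSpace ℝ X]
    (ε : ℝ) (K : Set (X →L[ℝ] ℝ)) : Set (X →L[ℝ] ℝ) :=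
  {f | f ∈ K ∧ ¬ ∃ (x : X) (t : ℝ), t < f x ∧
    EMetric.diam {g | g ∈ K ∧ t < g x} < ENNReal.ofReal ε}

/-- Transfinite iteration of a set derivation, with intersections at limit stages. -/
def derivIter {α : Type*} (D : Set α → Set α) (K : Set α) (o : Ordinal.{0}) : Set α :=
  Ordinal.limitRecOn o K (fun _ ih => D ih) (fun o _ ih => ⋂ (β : {β : Ordinal.{0} // β < o}), ih β.1 β.2)

open scoped Classical in
/-- The ordinal index associated with a derivation: the least ordinal at which the iterated
derived set of `K` is empty, or `⊤` (i.e. `∞`) if the derived sets are never empty. -/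
def derivIndex {α : Type*} (D : Set α → Set α) (K : Set α) : WithTop Ordinal.{0} :=
  if ∃ o : Ordinal.{0}, derivIter D K o = ∅
    then ((sInf {o : Ordinal.{0} | derivIter D K o = ∅} : Ordinal.{0}) : WithTop Ordinal.{0})
    else ⊤

/-- The `ε`-Szlenk index `Sz(X,ε)`. -/
def SzEps (X : Type*) [NormedAddCommGroup X] [NormedSpace ℝ X] (ε : ℝ) : WithTop Ordinal.{0} :=
  derivIndex (szlenkDeriv (X := X) ε) (closedBall (0 : X →L[ℝ] ℝ) 1)

/-- The Szlenk index `Sz(X) = sup_{ε > 0} Sz(X,ε)`. -/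
def Sz (X : Type*) [NormedAddCommGroup X] [NormedSpace ℝ X] : WithTop Ordinal.{0} :=
  ⨆ ε : {ε : ℝ // 0 < ε}, SzEps X ε.1

/-- The `ε`-weak\*-dentability index `Dz(X,ε)`. -/
def DzEps (X : Type*) [NormedAddCommGroup X] [NormedSpace ℝ X] (ε : ℝ) : WithTop Ordinal.{0} :=
  derivIndex (dentDeriv (X := X) ε) (closedBall (0 : X →L[ℝ] ℝ) 1)

/-- The weak\*-dentability index `Dz(X) = sup_{ε > 0} Dz(X,ε)`. -/
def Dz (X : Type*) [NormedAddCommGroup X] [NormedSpace ℝ X] : WithTop Ordinal.{0} :=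
  ⨆ ε : {ε : ℝ // 0 < ε}, DzEps X ε.1

/-- `L_p(X)`: the space of `X`-valued Bochner `p`-integrable functions on `[0,1]`. -/
abbrev LpOn (X : Type*) [NormedAddCommGroup X] (p : ℝ≥0∞) :=
  MeasureTheory.Lp (α := ℝ) X p ((MeasureTheory.volume : MeasureTheory.Measure ℝ).restrict (Icc 0 1))

/-- A normalized weakly null sequence. -/
def IsNormalizedWeaklyNull {X : Type*} [NormedAddCommGroup X] [NormedSpace ℝ X] (y : ℕ → X) : Prop :=
  (∀ n, ‖y n‖ = 1) ∧ ∀ f : X →L[ℝ] ℝ, Tendsto (fun n => f (y n)) atTop (nhds 0)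

/-- A tree on the unit sphere of `X`: a nonempty set of finite sequences of norm one vectors,
closed under taking initial segments. -/
def IsTreeOnSphere {X : Type*} [NormedAddCommGroup X] (A : Set (List X)) : Prop :=
  A.Nonempty ∧ (∀ l ∈ A, ∀ x ∈ l, ‖x‖ = 1) ∧ ∀ l ∈ A, ∀ l' : List X, l' <+: l → l' ∈ A

/-- A hereditary tree (H-tree) on the unit sphere of `X`: a tree containing all
subsequences of each of its members. -/
def IsHTree {X : Type*} [NormedAddCommGroup X] (A : Set (List X)) : Prop :=
  IsTreeOnSphere A ∧ ∀ l ∈ A, ∀ l' : List X, List.Sublist l' l → l' ∈ A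

/-- The weak derivative of a tree: all members which admit extensions inside the tree along a
normalized weakly null sequence, together with all initial segments of such members. -/
def weakDeriv {X : Type*} [NormedAddCommGroup X] [NormedSpace ℝ X] (A : Set (List X)) :
    Set (List X) :=
  {l | ∃ m ∈ A, l <+: m ∧ ∃ y : ℕ → X, IsNormalizedWeaklyNull y ∧ ∀ n, m ++ [y n] ∈ A}

/-- The weak index `I_w` of a tree on the unit sphere. -/
def Iw {X : Type*} [NormedAddCommGroup X] [NormedSpace ℝ X] (A : Set (List X)) :
    WithTop Ordinal.{0} :=
  derivIndex weakDeriv A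

/-- The tree `F_ρ^X` of finite normalized sequences which `ρ`-dominate the positive part of
the `ℓ_1` norm. -/
def FTree (X : Type*) [NormedAddCommGroup X] [NormedSpace ℝ X] (ρ : ℝ) : Set (List X) :=
  {l | (∀ x ∈ l, ‖x‖ = 1) ∧ ∀ a : ℕ → ℝ, (∀ i, 0 ≤ a i) →
    ρ * (∑ i ∈ Finset.range l.length, a i) ≤ ‖∑ i ∈ Finset.range l.length, a i • l.getD i 0‖}

/-- A finite sequence is `c`-basic if partial sums of linear combinations are dominated,
with constant `c`, by the full linear combination. -/
def IsCBasicSeq {X : Type*} [NormedAddCommGroup X] [NormedSpace ℝ X] (c : ℝ) (l : List X) : Prop :=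
  ∀ a : ℕ → ℝ, ∀ m ≤ l.length,
    ‖∑ i ∈ Finset.range m, a i • l.getD i 0‖ ≤
      c * ‖∑ i ∈ Finset.range l.length, a i • l.getD i 0‖

/-- An order isomorphism between trees: injective on `A`, mapping `A` into `B`, and preserving
and reflecting the strict initial-segment order. -/
def IsTreeOrderIso {X Y : Type*} (A : Set (List X)) (B : Set (List Y))
    (Ψ : List X → List Y) : Prop :=
  (∀ l ∈ A, Ψ l ∈ B) ∧ Set.InjOn Ψ A ∧
    ∀ l ∈ A, ∀ m ∈ A, ((Ψ l <+: Ψ m ∧ Ψ l ≠ Ψ m) ↔ (l <+: m ∧ l ≠ m))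

/-- Condition (2.1.1): `Ψ` maps weakly null extensions in `A` to weakly null extensions. -/
def MapsWeaklyNullExtensions {X Y : Type*} [NormedAddCommGroup X] [NormedSpace ℝ X]
    [NormedAddCommGroup Y] [NormedSpace ℝ Y] (A : Set (List X)) (Ψ : List X → List Y) : Prop :=
  ∀ l ∈ A, ∀ x : ℕ → X, IsNormalizedWeaklyNull x → (∀ k, l ++ [x k] ∈ A) →
    ∃ y : ℕ → Y, IsNormalizedWeaklyNull y ∧ ∀ k, Ψ (l ++ [x k]) = Ψ l ++ [y k]

/-- `C([0,β])`: the space of continuous functions on the ordinal interval `[0,β]`. -/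
abbrev COrd (β : Ordinal.{0}) := BoundedContinuousFunction (Iic β) ℝ

/-- The tree `A_{(F,c)}` of sequences in `A` which are `c`-dominated even after adding an
arbitrary vector of the finite-dimensional subspace `F`. -/
def treeWithFD {X : Type} [NormedAddCommGroup X] [NormedSpace ℝ X]
    (A : Set (List X)) (F : Submodule ℝ X) (c : ℝ) : Set (List X) :=
  {l | l ∈ A ∧ ∀ y ∈ F, ∀ a₀ : ℝ, ∀ a : ℕ → ℝ, ∀ m ≤ l.length,
    ‖a₀ • y + ∑ i ∈ Finset.range m, a i • l.getD i 0‖ ≤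
      c * ‖a₀ • y + ∑ i ∈ Finset.range l.length, a i • l.getD i 0‖}

-- ### Auxiliary development


lemma derivIter_zero' {α : Type*} (D : Set α → Set α) (K : Set α) : derivIter D K 0 = K :=
  Ordinal.limitRecOn_zero _ _ _

lemma derivIter_succ' {α : Type*} (D : Set α → Set α) (K : Set α) (o : Ordinal.{0}) :
    derivIter D K (Order.succ o) = D (derivIter D K o) :=
  Ordinal.limitRecOn_succ _ _ _ _

lemma derivIter_limit' {α : Type*} (D : Set α → Set α) (K : Set α) {o : Ordinal.{0}}
    (ho : Order.IsSuccLimit o) :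
    derivIter D K o = ⋂ (β : {β : Ordinal.{0} // β < o}), derivIter D K β.1 :=
  Ordinal.limitRecOn_limit _ _ _ _ ho

/-- Sublist-closedness of a set of lists. -/
def SublistClosed {X : Type*} (S : Set (List X)) : Prop :=
  ∀ l ∈ S, ∀ l' : List X, List.Sublist l' l → l' ∈ S

lemma sublistClosed_weakDeriv {X : Type*} [NormedAddCommGroup X] [NormedSpace ℝ X]
    {S : Set (List X)} (hS : SublistClosed S) : SublistClosed (weakDeriv S) := by
  rintro l ⟨m, hm, ⟨s, rfl⟩, y, hy, hext⟩ l' hl'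
  exact ⟨l' ++ s, hS _ hm _ (hl'.append (List.Sublist.refl s)), List.prefix_append _ _, y, hy,
    fun n => hS _ (hext n) _ ((hl'.append (List.Sublist.refl s)).append (List.Sublist.refl [y n]))⟩

lemma sublistClosed_derivIter {X : Type*} [NormedAddCommGroup X] [NormedSpace ℝ X]
    {A : Set (List X)} (hA : SublistClosed A) (o : Ordinal.{0}) :
    SublistClosed (derivIter weakDeriv A o) := by
  induction o using Ordinal.induction with
  | _ o IH =>
    rcases Ordinal.zero_or_succ_or_isSuccLimit o with rfl | ⟨b, rfl⟩ | ho
    · rwa [derivIter_zero']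
    · rw [derivIter_succ']; exact sublistClosed_weakDeriv (IH b (Order.lt_succ b))
    · rw [derivIter_limit' _ _ ho]
      intro l hl l' hl'
      simp only [Set.mem_iInter] at hl ⊢
      exact fun β => IH β.1 β.2 _ (hl β) _ hl'

lemma isNormalizedWeaklyNull_tail {X : Type*} [NormedAddCommGroup X] [NormedSpace ℝ X]
    {y : ℕ → X} (hy : IsNormalizedWeaklyNull y) (k : ℕ) :
    IsNormalizedWeaklyNull (fun n => y (n + k)) :=
  ⟨fun n => hy.1 _, fun f => (hy.2 f).comp (Filter.tendsto_add_atTop_nat k)⟩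

/-- Perturbation lemma: eventually a weakly null sequence barely affects norms of vectors
in a fixed finite-dimensional subspace. -/
lemma weaklyNull_perturb {X : Type} [NormedAddCommGroup X] [NormedSpace ℝ X]
    (G : Submodule ℝ X) [FiniteDimensional ℝ G] {C : ℝ} (hC : 1 < C)
    {y : ℕ → X} (hy : IsNormalizedWeaklyNull y) :
    ∃ i₀ : ℕ, ∀ i ≥ i₀, ∀ v ∈ G, ∀ t : ℝ, ‖v‖ ≤ C * ‖v + t • y i‖ := by
  have hC0 : (0:ℝ) < C := lt_trans one_pos hC
  have hinv : 1/C < 1 := by rw [div_lt_one hC0]; exact hC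
  set ε : ℝ := (1 - 1/C)/2 with hεdef
  have hεpos : 0 < ε := by simp only [hεdef]; linarith
  have hεeq : 1 - 2*ε = 1/C := by simp only [hεdef]; ring
  set K : Set X := Subtype.val '' (Metric.sphere (0:G) 1) with hKdef
  have hK : IsCompact K := (isCompact_sphere (0:G) 1).image continuous_subtype_val
  have hKn : ∀ v ∈ K, ‖v‖ = 1 ∧ v ∈ G := by
    rintro v ⟨u, hu, rfl⟩
    refine ⟨?_, u.2⟩
    have h1 : dist u 0 = 1 := hu
    rw [dist_eq_norm, sub_zero] at h1
    rw [← h1]; exact (Submodule.coe_norm u).symm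
  obtain ⟨T, hTK, hcov⟩ := hK.elim_nhds_subcover (fun v => Metric.ball v ε)
    (fun v _ => Metric.ball_mem_nhds v hεpos)
  have hTfun : ∀ v ∈ T, ∃ g : X →L[ℝ] ℝ, ‖g‖ = 1 ∧ g v = ‖v‖ := fun v hv =>
    exists_dual_vector ℝ v (by
      have h2 := (hKn v (hTK v hv)).1
      intro h0; rw [h0] at h2; norm_num at h2)
  choose! g hg1 hgv using hTfun
  have hev : ∀ᶠ i in atTop, ∀ v ∈ (T : Set X), |g v (y i)| < ε/3 := by
    rw [Filter.eventually_all_finite T.finite_toSet]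
    intro v hv
    exact (NormedAddCommGroup.tendsto_nhds_zero.mp (hy.2 (g v)) (ε/3) (by linarith)).mono
      (fun i hi => by rwa [Real.norm_eq_abs] at hi)
  obtain ⟨i₀, hi₀⟩ := Filter.eventually_atTop.mp hev
  refine ⟨i₀, fun i hi v hvG t => ?_⟩
  have hyi : ‖y i‖ = 1 := hy.1 i
  have key : ∀ u ∈ K, ∀ s : ℝ, 1 ≤ C * ‖u + s • y i‖ := by
    intro u hu s
    obtain ⟨hun, huG⟩ := hKn u hu
    rcases le_or_gt |s| 3 with hs | hs
    · obtain ⟨w, hwT, hw⟩ := Set.mem_iUnion₂.mp (hcov hu)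
      have hwn : ‖w‖ = 1 := (hKn w (hTK w hwT)).1
      have hdist : ‖u - w‖ < ε := by rw [← dist_eq_norm]; exact Metric.mem_ball.mp hw
      have hsm : |g w (y i)| < ε/3 := hi₀ i hi w hwT
      have h1 : |g w (u - w)| ≤ ‖u - w‖ := by
        have h := (g w).le_opNorm (u - w)
        rwa [hg1 w hwT, one_mul, Real.norm_eq_abs] at h
      have h2 : g w (u + s • y i) = g w w + g w (u - w) + s * g w (y i) := by
        have h3 : u + s • y i = w + (u - w) + s • y i := by abel
        rw [h3, map_add, map_add, map_smul, smul_eq_mul]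
      have hb : |s * g w (y i)| ≤ 3 * (ε/3) := by
        rw [abs_mul]
        exact mul_le_mul hs (le_of_lt hsm) (abs_nonneg _) (by norm_num)
      have n1 := neg_abs_le (g w (u - w))
      have n2 := neg_abs_le (s * g w (y i))
      have hlow : 1/C ≤ g w (u + s • y i) := by
        rw [h2, hgv w hwT, hwn]; linarith
      have hn : 1/C ≤ ‖u + s • y i‖ := by
        refine le_trans hlow (le_trans (le_abs_self _) ?_)
        have h := (g w).le_opNorm (u + s • y i)
        rwa [hg1 w hwT, one_mul, Real.norm_eq_abs] at h
      have h5 := mul_le_mul_of_nonneg_left hn hC0.le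
      rwa [mul_one_div, div_self hC0.ne'] at h5
    · have h4 := norm_sub_le (u + s • y i) u
      rw [add_sub_cancel_left, norm_smul, Real.norm_eq_abs, hyi, mul_one, hun] at h4
      nlinarith [norm_nonneg (u + s • y i)]
  rcases eq_or_ne v 0 with rfl | hv0
  · simp only [norm_zero]; positivity
  · have hvn : 0 < ‖v‖ := norm_pos_iff.mpr hv0
    set u := ‖v‖⁻¹ • v with hudef
    have huG : u ∈ G := Submodule.smul_mem _ _ hvG
    have hun : ‖u‖ = 1 := by
      rw [hudef, norm_smul, norm_inv, norm_norm, inv_mul_cancel₀ hvn.ne']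
    have huK : u ∈ K := ⟨⟨u, huG⟩, by
      simp only [Metric.mem_sphere, dist_eq_norm, sub_zero]
      rw [Submodule.coe_norm]; exact hun, rfl⟩
    set s := ‖v‖⁻¹ * t with hsdef
    have heq : v + t • y i = ‖v‖ • (u + s • y i) := by
      rw [hudef, hsdef, smul_add, smul_smul, smul_smul, mul_inv_cancel₀ hvn.ne', one_smul,
        ← mul_assoc, mul_inv_cancel₀ hvn.ne', one_mul]
    have hkey := key u huK s
    have hnorm : ‖v + t • y i‖ = ‖v‖ * ‖u + s • y i‖ := by
      rw [heq, norm_smul, Real.norm_eq_abs, abs_of_pos hvn]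
    rw [hnorm, show C * (‖v‖ * ‖u + s • y i‖) = ‖v‖ * (C * ‖u + s • y i‖) by ring]
    have h6 := mul_le_mul_of_nonneg_left hkey hvn.le
    rwa [mul_one] at h6

/-- The domination condition defining `treeWithFD`. -/
def FDCond {X : Type} [NormedAddCommGroup X] [NormedSpace ℝ X]
    (F : Submodule ℝ X) (c : ℝ) (l : List X) : Prop :=
  ∀ y ∈ F, ∀ a₀ : ℝ, ∀ a : ℕ → ℝ, ∀ m ≤ l.length,
    ‖a₀ • y + ∑ i ∈ Finset.range m, a i • l.getD i 0‖ ≤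
      c * ‖a₀ • y + ∑ i ∈ Finset.range l.length, a i • l.getD i 0‖

lemma mem_treeWithFD' {X : Type} [NormedAddCommGroup X] [NormedSpace ℝ X]
    {A : Set (List X)} {F : Submodule ℝ X} {c : ℝ} {l : List X} :
    l ∈ treeWithFD A F c ↔ l ∈ A ∧ FDCond F c l := Iff.rfl

/-- Extending a sequence satisfying the domination condition by a vector which barely
affects norms. -/
lemma fdcond_append {X : Type} [NormedAddCommGroup X] [NormedSpace ℝ X]
    {F G : Submodule ℝ X} (hFG : F ≤ G) {l : List X} (hlG : ∀ x ∈ l, x ∈ G)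
    {c' C : ℝ} (hc'0 : 0 ≤ c') (h1cC : 1 ≤ c' * C)
    (hcond : FDCond F c' l) {z : X}
    (hz : ∀ v ∈ G, ∀ t : ℝ, ‖v‖ ≤ C * ‖v + t • z‖) :
    FDCond F (c' * C) (l ++ [z]) := by
  intro y hy a₀ a m hm
  have hlen : (l ++ [z]).length = l.length + 1 := by simp
  rw [hlen] at hm
  have hvG : (a₀ • y + ∑ i ∈ Finset.range l.length, a i • l.getD i 0) ∈ G := by
    refine Submodule.add_mem _ (hFG (Submodule.smul_mem _ _ hy)) (Submodule.sum_mem _ ?_)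
    intro i hi
    refine Submodule.smul_mem _ _ (hlG _ ?_)
    rw [List.getD_eq_getElem l 0 (Finset.mem_range.mp hi)]
    exact List.getElem_mem _
  have hfull : ∑ i ∈ Finset.range (l ++ [z]).length, a i • (l ++ [z]).getD i 0
      = (∑ i ∈ Finset.range l.length, a i • l.getD i 0) + a l.length • z := by
    rw [hlen, Finset.sum_range_succ]
    congr 1
    · exact Finset.sum_congr rfl fun i hi => by
        rw [List.getD_append _ _ _ _ (Finset.mem_range.mp hi)]
    · rw [List.getD_append_right _ _ _ _ (le_refl l.length)]
      simp
  rcases hm.lt_or_eq with hm' | rfl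
  · have hm'' : m ≤ l.length := Nat.lt_succ_iff.mp hm'
    have hpart : ∑ i ∈ Finset.range m, a i • (l ++ [z]).getD i 0
        = ∑ i ∈ Finset.range m, a i • l.getD i 0 :=
      Finset.sum_congr rfl fun i hi => by
        rw [List.getD_append _ _ _ _ (lt_of_lt_of_le (Finset.mem_range.mp hi) hm'')]
    rw [hpart, hfull, ← add_assoc]
    calc ‖a₀ • y + ∑ i ∈ Finset.range m, a i • l.getD i 0‖
        ≤ c' * ‖a₀ • y + ∑ i ∈ Finset.range l.length, a i • l.getD i 0‖ :=
          hcond y hy a₀ a m hm''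
      _ ≤ c' * (C * ‖(a₀ • y + ∑ i ∈ Finset.range l.length, a i • l.getD i 0) + a l.length • z‖) :=
          mul_le_mul_of_nonneg_left (hz _ hvG _) hc'0
      _ = c' * C * ‖(a₀ • y + ∑ i ∈ Finset.range l.length, a i • l.getD i 0) + a l.length • z‖ := by
          ring
  · rw [hlen]
    exact le_mul_of_one_le_left (norm_nonneg _) h1cC

/-- Main inductive lemma. -/
lemma main_ind {X : Type} [NormedAddCommGroup X] [NormedSpace ℝ X]
    {A : Set (List X)} (hsub : SublistClosed A) (F : Submodule ℝ X) [FiniteDimensional ℝ F]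
    (c : ℝ) (α : Ordinal.{0}) :
    ∀ c' : ℝ, 1 ≤ c' → c' < c → ∀ l ∈ derivIter weakDeriv A α, FDCond F c' l →
      l ∈ derivIter weakDeriv (treeWithFD A F c) α := by
  induction α using Ordinal.induction with
  | _ α IH =>
  intro c' hc'1 hc'c l hl hcond
  rcases Ordinal.zero_or_succ_or_isSuccLimit α with rfl | ⟨β, rfl⟩ | hlim
  · rw [derivIter_zero'] at hl ⊢
    refine ⟨hl, fun y hy a₀ a m hm => le_trans (hcond y hy a₀ a m hm) ?_⟩
    exact mul_le_mul_of_nonneg_right hc'c.le (norm_nonneg _)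
  · rw [derivIter_succ'] at hl ⊢
    obtain ⟨m, hm, hlm, y, hy, hext⟩ := hl
    have hscA := sublistClosed_derivIter hsub β
    have hlA : l ∈ derivIter weakDeriv A β := hscA m hm l hlm.sublist
    have hc'0 : (0:ℝ) < c' := lt_of_lt_of_le one_pos hc'1
    set c'' : ℝ := (c' + c)/2 with hc''def
    have h1 : 1 ≤ c'' := by rw [hc''def]; linarith
    have h2 : c'' < c := by rw [hc''def]; linarith
    have h3 : c' < c'' := by rw [hc''def]; linarith
    haveI : FiniteDimensional ℝ (Submodule.span ℝ {x | x ∈ l}) :=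
      FiniteDimensional.span_of_finite ℝ l.finite_toSet
    set G : Submodule ℝ X := F ⊔ Submodule.span ℝ {x | x ∈ l} with hGdef
    haveI : FiniteDimensional ℝ G := Submodule.finiteDimensional_sup _ _
    have hCgt : 1 < c'' / c' := (one_lt_div hc'0).mpr h3
    obtain ⟨i₀, hi₀⟩ := weaklyNull_perturb G hCgt hy
    have hCeq : c' * (c'' / c') = c'' := by field_simp
    refine ⟨l, IH β (Order.lt_succ β) c' hc'1 hc'c l hlA hcond, List.prefix_refl l,
      fun k => y (k + i₀), isNormalizedWeaklyNull_tail hy i₀, fun k => ?_⟩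
    refine IH β (Order.lt_succ β) c'' h1 h2 _ ?_ ?_
    · exact hscA _ (hext (k + i₀)) _ ((hlm.sublist).append (List.Sublist.refl _))
    · have hc := fdcond_append (le_sup_left : F ≤ G)
        (fun x hx => (le_sup_right : Submodule.span ℝ {x | x ∈ l} ≤ G)
          (Submodule.subset_span hx)) hc'0.le (by rw [hCeq]; exact h1) hcond
        (hi₀ (k + i₀) (Nat.le_add_left _ _))
      rwa [hCeq] at hc
  · rw [derivIter_limit' _ _ hlim] at hl ⊢
    rw [Set.mem_iInter] at hl ⊢
    exact fun β => IH β.1 β.2 c' hc'1 hc'c l (hl β) hcond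


/-- For an H-tree `A` and a countable ordinal `α`: if `A^(α) ≠ ∅`, then
`(A_{(F,c)})^(α) ≠ ∅` for every `c > 1` and every finite-dimensional subspace `F ⊆ X`. -/
theorem derivIter_treeWithFD_nonempty
    (X : Type) [NormedAddCommGroup X] [NormedSpace ℝ X] [CompleteSpace X]
    (A : Set (List X)) (hA : IsHTree A)
    (α : Ordinal.{0}) (hα : α < (Cardinal.aleph 1).ord)
    (h : derivIter weakDeriv A α ≠ ∅) :
    ∀ c : ℝ, 1 < c → ∀ F : Submodule ℝ X, FiniteDimensional ℝ F →
      derivIter weakDeriv (treeWithFD A F c) α ≠ ∅ := by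
  intro c hc F hF
  haveI := hF
  obtain ⟨l, hl⟩ := Set.nonempty_iff_ne_empty.mpr h
  have hsub : SublistClosed A := fun l hl l' h' => hA.2 l hl l' h'
  have hnil : [] ∈ derivIter weakDeriv A α :=
    sublistClosed_derivIter hsub α l hl [] (List.nil_sublist l)
  have hcondnil : FDCond F 1 ([] : List X) := by
    intro y hy a₀ a m hm
    have hm0 : m = 0 := Nat.le_zero.mp hm
    subst hm0
    simp
  have hmem := main_ind hsub F c α 1 le_rfl hc [] hnil hcondnil
  intro he
  rw [he] at hmem
  exact hmem

end
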